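/- (Lemma 9.) Let g : ℝⁿ → ℝ ∪ {+∞} be proper, convex and lower semicontinuous, η > 0, σ > 0, w ≥ 1, and let S : ℝⁿ → ℝ be continuously differentiable. Let (Ω, F, P) be a probability space and 𝒢 ⊆ F a sub-σ-algebra. Let Y : Ω → ℝⁿ be 𝒢-measurable and square-integrable, and let G : Ω → ℝⁿ be square-integrable with ∇S(Y) square-integrable, such that E[G | 𝒢] = ∇S(Y) almost surely and E[‖G − ∇S(Y)‖² | 𝒢] ≤ σ²/w² almost surely. Set Y⁺ = prox_{ηg}(Y − η G). Then E[⟨G − ∇S(Y), Y⁺ − Y⟩ | 𝒢] ≥ −η σ²/w² almost surely. -/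

import Mathlib

noncomputable section

open Finset MeasureTheory
open scoped RealInnerProductSpace

/-- `g : ℝⁿ → ℝ ∪ {+∞}` is proper, convex and lower semicontinuous. -/
def ProperConvexLsc {n : ℕ} (g : EuclideanSpace ℝ (Fin n) → WithTop ℝ) : Prop :=
  (∃ x, g x ≠ ⊤) ∧ LowerSemicontinuous g ∧
    ∀ x y : EuclideanSpace ℝ (Fin n), ∀ a b : ℝ, 0 ≤ a → 0 ≤ b → a + b = 1 →
      g (a • x + b • y) ≤ (a : WithTop ℝ) * g x + (b : WithTop ℝ) * g y

/-- `p` is a minimizer of `z ↦ η·g(z) + ½‖u − z‖²`. -/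
def IsProxPt {n : ℕ} (g : EuclideanSpace ℝ (Fin n) → WithTop ℝ) (η : ℝ)
    (u p : EuclideanSpace ℝ (Fin n)) : Prop :=
  ∀ z : EuclideanSpace ℝ (Fin n),
    (η : WithTop ℝ) * g p + ((1 / 2 * ‖u - p‖ ^ 2 : ℝ) : WithTop ℝ) ≤
      (η : WithTop ℝ) * g z + ((1 / 2 * ‖u - z‖ ^ 2 : ℝ) : WithTop ℝ)

/-- `prox` is the proximal operator of `ηg`: `prox u` is the unique minimizer of
`z ↦ η·g(z) + ½‖u − z‖²`. -/
def IsProxFun {n : ℕ} (g : EuclideanSpace ℝ (Fin n) → WithTop ℝ) (η : ℝ)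
    (prox : EuclideanSpace ℝ (Fin n) → EuclideanSpace ℝ (Fin n)) : Prop :=
  ∀ u, IsProxPt g η u (prox u) ∧ ∀ q, IsProxPt g η u q → q = prox u

/-- The prox-grad residual `P_η^g(x; d) = (x − prox_{ηg}(x − η d))/η`. -/
def proxRes {n : ℕ} (prox : EuclideanSpace ℝ (Fin n) → EuclideanSpace ℝ (Fin n)) (η : ℝ)
    (x d : EuclideanSpace ℝ (Fin n)) : EuclideanSpace ℝ (Fin n) :=
  η⁻¹ • (x - prox (x - η • d))

section Helpers
variable {Ω : Type*} {m m0 : MeasurableSpace Ω} {μ : Measure Ω}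

lemma condexp_clm_comm [IsFiniteMeasure μ] (hm : m ≤ m0)
    {E F : Type*} [NormedAddCommGroup E] [NormedSpace ℝ E] [CompleteSpace E]
    [NormedAddCommGroup F] [NormedSpace ℝ F] [CompleteSpace F]
    (T : E →L[ℝ] F) {f : Ω → E} (hf : Integrable f μ) :
    (fun ω => T ((μ[f|m]) ω)) =ᵐ[μ] μ[fun ω => T (f ω)|m] := by
  haveI : SigmaFinite (μ.trim hm) := inferInstance
  refine ae_eq_condExp_of_forall_setIntegral_eq hm (T.integrable_comp hf)
    (fun s _ _ => (T.integrable_comp integrable_condExp).integrableOn)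
    (fun s hs hμs => ?_) ?_
  · rw [T.integral_comp_comm integrable_condExp.integrableOn,
      T.integral_comp_comm hf.integrableOn, setIntegral_condExp hm hf hs]
  · exact (show StronglyMeasurable[m] (fun ω => T ((μ[f|m]) ω)) from
      T.continuous.comp_stronglyMeasurable stronglyMeasurable_condExp).aestronglyMeasurable

lemma integrable_inner2 {E : Type*} [NormedAddCommGroup E] [InnerProductSpace ℝ E]
    {f g : Ω → E} (hf : MemLp f 2 μ) (hg : MemLp g 2 μ) :
    Integrable (fun ω => ⟪f ω, g ω⟫) μ := by
  have h := L2.integrable_inner (𝕜 := ℝ) (hf.toLp f) (hg.toLp g)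
  refine h.congr ?_
  filter_upwards [hf.coeFn_toLp, hg.coeFn_toLp] with ω h1 h2
  rw [h1, h2]

end Helpers

section Prox
variable {n : ℕ} {g : EuclideanSpace ℝ (Fin n) → WithTop ℝ} {η : ℝ}
  {u v p q : EuclideanSpace ℝ (Fin n)}

lemma proxpt_ne_top (hg : ProperConvexLsc g) (hη : 0 < η) (hp : IsProxPt g η u p) :
    g p ≠ ⊤ := by
  obtain ⟨x₀, hx₀⟩ := hg.1
  intro htop
  obtain ⟨c, hc⟩ := WithTop.ne_top_iff_exists.mp hx₀
  have h := hp x₀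
  rw [htop, ← hc, WithTop.mul_top (by exact_mod_cast hη.ne'), top_add, top_le_iff,
    ← WithTop.coe_mul, ← WithTop.coe_add] at h
  exact WithTop.coe_ne_top h

lemma prox_inner_le (hg : ProperConvexLsc g) (hη : 0 < η)
    (hp : IsProxPt g η u p) {a b : ℝ} (hga : g p = (a : WithTop ℝ)) (hgb : g q = (b : WithTop ℝ)) :
    ⟪u - p, q - p⟫ ≤ η * (b - a) := by
  have key : ∀ t : ℝ, 0 < t → t ≤ 1 → ⟪u - p, q - p⟫ ≤ η * (b - a) + t / 2 * ‖q - p‖ ^ 2 := by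
    intro t ht ht1
    set mt : EuclideanSpace ℝ (Fin n) := (1 - t) • p + t • q with hmt
    have hconv := hg.2.2 p q (1 - t) t (by linarith) ht.le (by ring)
    rw [hga, hgb, ← WithTop.coe_mul, ← WithTop.coe_mul, ← WithTop.coe_add] at hconv
    have hne : g mt ≠ ⊤ := by
      intro h
      rw [h, top_le_iff] at hconv
      exact WithTop.coe_ne_top hconv
    obtain ⟨c, hc⟩ := WithTop.ne_top_iff_exists.mp hne
    rw [← hc, WithTop.coe_le_coe] at hconv
    have h := hp mt
    rw [hga, ← hc, ← WithTop.coe_mul, ← WithTop.coe_mul, ← WithTop.coe_add, ← WithTop.coe_add,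
      WithTop.coe_le_coe] at h
    have hmte : u - mt = (u - p) - t • (q - p) := by
      rw [hmt]
      module
    have hnorm : ‖u - mt‖ ^ 2 = ‖u - p‖ ^ 2 - 2 * (t * ⟪u - p, q - p⟫) + t ^ 2 * ‖q - p‖ ^ 2 := by
      rw [hmte, norm_sub_sq_real, real_inner_smul_right, norm_smul]
      simp only [mul_pow, Real.norm_eq_abs, sq_abs]
    have h2 : η * a + 1 / 2 * ‖u - p‖ ^ 2 ≤
        η * ((1 - t) * a + t * b) + 1 / 2 * ‖u - mt‖ ^ 2 := by
      calc η * a + 1 / 2 * ‖u - p‖ ^ 2 ≤ η * c + 1 / 2 * ‖u - mt‖ ^ 2 := h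
        _ ≤ η * ((1 - t) * a + t * b) + 1 / 2 * ‖u - mt‖ ^ 2 := by
            have := mul_le_mul_of_nonneg_left hconv hη.le
            linarith
    rw [hnorm] at h2
    have h3 : t * ⟪u - p, q - p⟫ ≤ t * (η * (b - a)) + t ^ 2 / 2 * ‖q - p‖ ^ 2 := by nlinarith
    have h4 := (mul_le_mul_iff_right₀ ht).mp (by nlinarith : t * ⟪u - p, q - p⟫ ≤
      t * (η * (b - a) + t / 2 * ‖q - p‖ ^ 2))
    linarith
  by_contra hlt
  push_neg at hlt
  rcases eq_or_ne q p with h | h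
  · simp [h] at hlt
    have := key 1 one_pos le_rfl
    simp [h] at this
    linarith
  · set ε := ⟪u - p, q - p⟫ - η * (b - a) with hε
    have hεpos : 0 < ε := by linarith
    have hqp : 0 < ‖q - p‖ ^ 2 :=
      pow_pos (norm_pos_iff.mpr (sub_ne_zero.mpr h)) 2
    set t := min 1 (ε / ‖q - p‖ ^ 2) with htdef
    have htpos : 0 < t := lt_min one_pos (div_pos hεpos hqp)
    have ht1 : t ≤ 1 := min_le_left _ _
    have hkey := key t htpos ht1
    have : t / 2 * ‖q - p‖ ^ 2 ≤ ε / 2 := by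
      have h1 : t ≤ ε / ‖q - p‖ ^ 2 := min_le_right _ _
      have := mul_le_mul_of_nonneg_right h1 hqp.le
      rw [div_mul_cancel₀ _ hqp.ne'] at this
      linarith
    linarith

lemma proxpt_lipschitz (hg : ProperConvexLsc g) (hη : 0 < η)
    (hp : IsProxPt g η u p) (hq : IsProxPt g η v q) : ‖p - q‖ ≤ ‖u - v‖ := by
  obtain ⟨a, ha⟩ := WithTop.ne_top_iff_exists.mp (proxpt_ne_top hg hη hp)
  obtain ⟨b, hb⟩ := WithTop.ne_top_iff_exists.mp (proxpt_ne_top hg hη hq)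
  have h1 := prox_inner_le hg hη hp ha.symm hb.symm
  have h2 := prox_inner_le hg hη hq hb.symm ha.symm
  have hCS : ‖p - q‖ ^ 2 ≤ ⟪u - v, p - q⟫ := by
    have hid : ⟪u - p, q - p⟫ + ⟪v - q, p - q⟫ = -⟪u - v, p - q⟫ + ‖p - q‖ ^ 2 := by
      rw [← real_inner_self_eq_norm_sq]
      simp only [inner_sub_left, inner_sub_right, neg_sub]
      linarith [real_inner_comm p q]
    linarith [hid, h1, h2]
  rcases eq_or_ne p q with h | h
  · simp [h]
  · have hpq : 0 < ‖p - q‖ := norm_pos_iff.mpr (sub_ne_zero.mpr h)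
    have hCS2 : ⟪u - v, p - q⟫ ≤ ‖u - v‖ * ‖p - q‖ := real_inner_le_norm _ _
    have hsq : ‖p - q‖ * ‖p - q‖ ≤ ‖u - v‖ * ‖p - q‖ := by nlinarith
    exact le_of_mul_le_mul_right hsq hpq

end Prox


section MemL2
variable {Ω : Type*} [MeasurableSpace Ω] {μ : Measure Ω} [IsFiniteMeasure μ] {n : ℕ}

lemma memℒp_lip_comp {E F : Type*} [NormedAddCommGroup E] [NormedAddCommGroup F]
    {T : E → F} (hT : LipschitzWith 1 T) {f : Ω → E} (hf : MemLp f 2 μ) :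
    MemLp (fun ω => T (f ω)) 2 μ := by
  have hL0 : LipschitzWith 1 (fun x => T x - T 0) := by
    refine LipschitzWith.of_dist_le_mul fun x y => ?_
    rw [dist_sub_right]
    simpa using hT.dist_le_mul x y
  have h1 : MemLp ((fun x => T x - T 0) ∘ f) 2 μ := hL0.comp_memLp (by simp) hf
  have heq : (fun ω => T (f ω)) = ((fun x => T x - T 0) ∘ f) + fun _ => T 0 := by
    funext ω
    simp
  rw [heq]
  exact h1.add (memLp_const _)

lemma abs_coord_le (v : EuclideanSpace ℝ (Fin n)) (i : Fin n) : |v i| ≤ ‖v‖ := by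
  rw [EuclideanSpace.norm_eq, ← Real.sqrt_sq_eq_abs]
  apply Real.sqrt_le_sqrt
  have h := Finset.single_le_sum (f := fun j => ‖v j‖ ^ 2)
    (fun j _ => sq_nonneg _) (Finset.mem_univ i)
  simpa [Real.norm_eq_abs, sq_abs] using h

lemma memℒp_coord {f : Ω → EuclideanSpace ℝ (Fin n)} (hf : MemLp f 2 μ) (i : Fin n) :
    MemLp (fun ω => f ω i) 2 μ := by
  have hT : LipschitzWith 1 (fun x : EuclideanSpace ℝ (Fin n) => x i) := by
    refine LipschitzWith.of_dist_le_mul fun x y => ?_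
    rw [Real.dist_eq, dist_eq_norm]
    have hxy : x i - y i = (x - y) i := rfl
    rw [hxy]
    simpa using abs_coord_le (x - y) i
  exact memℒp_lip_comp hT hf

end MemL2


/-- Lemma 9: if `E[G | 𝒢] = ∇S(Y)` a.s. and
`E[‖G − ∇S(Y)‖² | 𝒢] ≤ σ²/w²` a.s., then with `Y⁺ = prox_{ηg}(Y − ηG)`,
`E[⟨G − ∇S(Y), Y⁺ − Y⟩ | 𝒢] ≥ −ησ²/w²` almost surely. -/
theorem stmt7 {n : ℕ} {Ω : Type*} [inst : MeasurableSpace Ω] (μ : Measure Ω)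
    [IsProbabilityMeasure μ] (m : MeasurableSpace Ω) (hm : m ≤ inst)
    (g : EuclideanSpace ℝ (Fin n) → WithTop ℝ) (hg : ProperConvexLsc g)
    (prox : EuclideanSpace ℝ (Fin n) → EuclideanSpace ℝ (Fin n))
    (η σ w : ℝ) (hη : 0 < η) (hσ : 0 < σ) (hw : 1 ≤ w)
    (hprox : IsProxFun g η prox)
    (S : EuclideanSpace ℝ (Fin n) → ℝ) (S' : EuclideanSpace ℝ (Fin n) → EuclideanSpace ℝ (Fin n))
    (hgrad : ∀ x, HasGradientAt S (S' x) x) (hS'cont : Continuous S')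
    (Y G : Ω → EuclideanSpace ℝ (Fin n))
    (hYmeas : Measurable[m] Y)
    (hY2 : MemLp Y 2 μ) (hG2 : MemLp G 2 μ) (hSY2 : MemLp (fun ω => S' (Y ω)) 2 μ)
    (hcond : μ[G|m] =ᵐ[μ] fun ω => S' (Y ω))
    (hvar : ∀ᵐ ω ∂μ, (μ[fun ω' => ‖G ω' - S' (Y ω')‖ ^ 2|m]) ω ≤ σ ^ 2 / w ^ 2)
    (Yp : Ω → EuclideanSpace ℝ (Fin n)) (hYp : ∀ ω, Yp ω = prox (Y ω - η • G ω)) :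
    ∀ᵐ ω ∂μ,
      -(η * σ ^ 2 / w ^ 2) ≤ (μ[fun ω' => ⟪G ω' - S' (Y ω'), Yp ω' - Y ω'⟫|m]) ω := by
  haveI : SigmaFinite (μ.trim hm) := inferInstance
  -- prox is 1-Lipschitz
  have hL : LipschitzWith 1 prox := by
    refine LipschitzWith.of_dist_le_mul fun x y => ?_
    simpa [dist_eq_norm] using proxpt_lipschitz hg hη (hprox x).1 (hprox y).1
  have hproxMem : ∀ f : Ω → EuclideanSpace ℝ (Fin n), MemLp f 2 μ →
      MemLp (fun ω => prox (f ω)) 2 μ := fun f hf =>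
    @memℒp_lip_comp Ω inst μ _ _ _ _ _ _ hL _ hf
  -- the deterministic prox point
  set Yb : Ω → EuclideanSpace ℝ (Fin n) := fun ω => prox (Y ω - η • S' (Y ω)) with hYbdef
  have hSYm : Measurable[m] fun ω => S' (Y ω) := hS'cont.measurable.comp hYmeas
  have hYbm : Measurable[m] Yb :=
    hL.continuous.measurable.comp (hYmeas.sub (hSYm.const_smul η))
  have hZm : Measurable[m] fun ω => Yb ω - Y ω := hYbm.sub hYmeas
  have hYb2 : MemLp Yb 2 μ := hproxMem _ (hY2.sub (hSY2.const_smul η))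
  have hYp2 : MemLp Yp 2 μ := by
    have : Yp = fun ω => prox (Y ω - η • G ω) := funext hYp
    rw [this]
    exact hproxMem _ (hY2.sub (hG2.const_smul η))
  have hΔ2 : MemLp (fun ω => G ω - S' (Y ω)) 2 μ := hG2.sub hSY2
  have hΔint : Integrable (fun ω => G ω - S' (Y ω)) μ := hΔ2.integrable one_le_two
  have hZ2 : MemLp (fun ω => Yb ω - Y ω) 2 μ := hYb2.sub hY2
  -- integrability of the inner products
  have hf_int : Integrable (fun ω => ⟪G ω - S' (Y ω), Yp ω - Y ω⟫) μ :=
    integrable_inner2 hΔ2 (hYp2.sub hY2)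
  have hZ_int : Integrable (fun ω => ⟪G ω - S' (Y ω), Yb ω - Y ω⟫) μ :=
    integrable_inner2 hΔ2 hZ2
  have hnormsq_int : Integrable (fun ω => ‖G ω - S' (Y ω)‖ ^ 2) μ := by
    have := integrable_inner2 hΔ2 hΔ2
    refine this.congr (Filter.Eventually.of_forall fun ω => ?_)
    exact real_inner_self_eq_norm_sq _
  -- E[Δ | m] = 0
  have hμΔ : μ[fun ω => G ω - S' (Y ω)|m] =ᵐ[μ] 0 := by
    have h1 := condExp_sub (μ := μ) (m := m) (hG2.integrable one_le_two)
      (hSY2.integrable one_le_two)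
    have h2 : μ[fun ω => S' (Y ω)|m] = fun ω => S' (Y ω) :=
      condExp_of_stronglyMeasurable hm hSYm.stronglyMeasurable (hSY2.integrable one_le_two)
    have h1' : μ[fun ω => G ω - S' (Y ω)|m] =ᵐ[μ] μ[G|m] - μ[fun ω => S' (Y ω)|m] := h1
    filter_upwards [h1', hcond] with ω hω1 hω2
    rw [hω1]
    simp [Pi.sub_apply, h2, hω2]
  -- coordinates of Δ have zero conditional expectation
  have hμΔi : ∀ i : Fin n, μ[fun ω => (G ω - S' (Y ω)) i|m] =ᵐ[μ] 0 := by
    intro i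
    have h := condexp_clm_comm hm (EuclideanSpace.proj (𝕜 := ℝ) i) hΔint
    refine h.symm.trans ?_
    filter_upwards [hμΔ] with ω hω
    simp [hω]
  -- conditional expectation of ⟪Δ, Z⟫ is 0
  have hinnerZ_zero : μ[fun ω => ⟪G ω - S' (Y ω), Yb ω - Y ω⟫|m] =ᵐ[μ] 0 := by
    have hrw : (fun ω => ⟪G ω - S' (Y ω), Yb ω - Y ω⟫) =
        ∑ i : Fin n, fun ω => (Yb ω - Y ω) i * (G ω - S' (Y ω)) i := by
      funext ω
      simp only [Finset.sum_apply]
      rw [PiLp.inner_apply]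
      congr 1
    have hZi2 : ∀ i : Fin n, MemLp (fun ω => (Yb ω - Y ω) i) 2 μ := fun i =>
      @memℒp_coord Ω inst μ _ n _ hZ2 i
    have hΔi2 : ∀ i : Fin n, MemLp (fun ω => (G ω - S' (Y ω)) i) 2 μ := fun i =>
      @memℒp_coord Ω inst μ _ n _ hΔ2 i
    have hint : ∀ i : Fin n,
        Integrable (fun ω => (Yb ω - Y ω) i * (G ω - S' (Y ω)) i) μ := fun i => by
      have := integrable_inner2 (hZi2 i) (hΔi2 i)
      simpa [RCLike.inner_apply, mul_comm] using this
    rw [hrw]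
    have hsum := condExp_finset_sum (μ := μ) (m := m)
      (f := fun i : Fin n => fun ω => (Yb ω - Y ω) i * (G ω - S' (Y ω)) i)
      (s := Finset.univ) (fun i _ => hint i)
    refine hsum.trans ?_
    have hterm : ∀ i : Fin n,
        μ[fun ω => (Yb ω - Y ω) i * (G ω - S' (Y ω)) i|m] =ᵐ[μ] 0 := by
      intro i
      have hpull := condExp_mul_of_stronglyMeasurable_left
        (f := fun ω => (Yb ω - Y ω) i) (g := fun ω => (G ω - S' (Y ω)) i)
        (((measurable_pi_apply i).comp ((WithLp.measurable_ofLp 2 _).comp hZm)).stronglyMeasurable)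
        (hint i) ((hΔi2 i).integrable one_le_two)
      refine hpull.trans ?_
      filter_upwards [hμΔi i] with ω hω
      simp only [Pi.mul_apply, hω, Pi.zero_apply, mul_zero]
    have : ∀ᵐ ω ∂μ, ∀ i : Fin n,
        (μ[fun ω => (Yb ω - Y ω) i * (G ω - S' (Y ω)) i|m]) ω = 0 := by
      rw [MeasureTheory.ae_all_iff]
      exact fun i => hterm i
    filter_upwards [this] with ω hω
    simp only [Finset.sum_apply, Pi.zero_apply]
    exact Finset.sum_eq_zero fun i _ => hω i
  -- pointwise bound
  have key : ∀ ω, ⟪G ω - S' (Y ω), Yb ω - Y ω⟫ - η * ‖G ω - S' (Y ω)‖ ^ 2 ≤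
      ⟪G ω - S' (Y ω), Yp ω - Y ω⟫ := by
    intro ω
    have hdiff : ⟪G ω - S' (Y ω), Yp ω - Y ω⟫ - ⟪G ω - S' (Y ω), Yb ω - Y ω⟫ =
        ⟪G ω - S' (Y ω), Yp ω - Yb ω⟫ := by
      rw [← inner_sub_right]
      congr 1
      module
    have hnonexp : ‖Yp ω - Yb ω‖ ≤ η * ‖G ω - S' (Y ω)‖ := by
      rw [hYp ω, hYbdef]
      calc ‖prox (Y ω - η • G ω) - prox (Y ω - η • S' (Y ω))‖
          ≤ ‖(Y ω - η • G ω) - (Y ω - η • S' (Y ω))‖ :=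
            proxpt_lipschitz hg hη (hprox _).1 (hprox _).1
        _ = η * ‖G ω - S' (Y ω)‖ := by
            have : (Y ω - η • G ω) - (Y ω - η • S' (Y ω)) = (-η) • (G ω - S' (Y ω)) := by
              module
            rw [this, norm_smul]
            simp [abs_of_pos hη]
    have habs : -(‖G ω - S' (Y ω)‖ * ‖Yp ω - Yb ω‖) ≤ ⟪G ω - S' (Y ω), Yp ω - Yb ω⟫ :=
      neg_le_of_neg_le (by
        have := abs_real_inner_le_norm (G ω - S' (Y ω)) (Yp ω - Yb ω)
        have h2 := neg_abs_le ⟪G ω - S' (Y ω), Yp ω - Yb ω⟫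
        linarith)
    nlinarith [norm_nonneg (G ω - S' (Y ω)), norm_nonneg (Yp ω - Yb ω),
      mul_le_mul_of_nonneg_left hnonexp (norm_nonneg (G ω - S' (Y ω))), hdiff]
  -- condexp monotonicity
  have hlhs_int : Integrable
      (fun ω => ⟪G ω - S' (Y ω), Yb ω - Y ω⟫ - η * ‖G ω - S' (Y ω)‖ ^ 2) μ :=
    hZ_int.sub (hnormsq_int.const_mul η)
  have hmono := condExp_mono (μ := μ) (m := m) hlhs_int hf_int
    (Filter.Eventually.of_forall key)
  have hsub := condExp_sub (μ := μ) (m := m) hZ_int (hnormsq_int.const_mul η)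
  have hsmul : μ[fun ω => η * ‖G ω - S' (Y ω)‖ ^ 2|m] =ᵐ[μ]
      fun ω => η * (μ[fun ω' => ‖G ω' - S' (Y ω')‖ ^ 2|m]) ω := by
    have h := condExp_smul (μ := μ) (m := m) (𝕜 := ℝ) η
      (fun ω => ‖G ω - S' (Y ω)‖ ^ 2)
    exact h
  filter_upwards [hmono, hsub, hsmul, hinnerZ_zero, hvar] with ω h1 h2 h3 h4 h5
  have h2' : (μ[fun ω => ⟪G ω - S' (Y ω), Yb ω - Y ω⟫ -
      η * ‖G ω - S' (Y ω)‖ ^ 2|m]) ω =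
      (μ[fun ω => ⟪G ω - S' (Y ω), Yb ω - Y ω⟫|m]) ω -
      (μ[fun ω => η * ‖G ω - S' (Y ω)‖ ^ 2|m]) ω := h2
  have e1 : (μ[fun ω => ⟪G ω - S' (Y ω), Yb ω - Y ω⟫ -
      η * ‖G ω - S' (Y ω)‖ ^ 2|m]) ω =
      0 - η * (μ[fun ω' => ‖G ω' - S' (Y ω')‖ ^ 2|m]) ω := by
    rw [h2', h3, h4]
    rfl
  have e2 : -(η * σ ^ 2 / w ^ 2) ≤ 0 - η * (μ[fun ω' => ‖G ω' - S' (Y ω')‖ ^ 2|m]) ω := by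
    have := mul_le_mul_of_nonneg_left h5 hη.le
    rw [mul_div_assoc]
    linarith
  calc -(η * σ ^ 2 / w ^ 2) ≤ 0 - η * (μ[fun ω' => ‖G ω' - S' (Y ω')‖ ^ 2|m]) ω := e2
    _ = (μ[fun ω => ⟪G ω - S' (Y ω), Yb ω - Y ω⟫ - η * ‖G ω - S' (Y ω)‖ ^ 2|m]) ω := e1.symm
    _ ≤ (μ[fun ω' => ⟪G ω' - S' (Y ω'), Yp ω' - Y ω'⟫|m]) ω := h1
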